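/- Let R be a commutative Noetherian ring and let R' be an R-module for which there exists an exact sequence 0 → P₂ → P₁ → R' → 0 of R-modules in which P₁ and P₂ are finitely generated projective. Let M be a finitely generated R-module such that the abelian group Ext¹_R(M, R) vanishes. Then the natural map Hom_R(M, R) ⊗_R R' → Hom_R(M, R'), sending f ⊗ x to the homomorphism m ↦ f(m) • x, is bijective. -/

import Mathlib

open TensorProduct CategoryTheory

universe u

section Aux

variable {R : Type*} [CommRing R] {M N N' : Type*} [AddCommGroup M] [Module R M]
  [AddCommGroup N] [Module R N] [AddCommGroup N'] [Module R N']

lemma dth_natural (u : N →ₗ[R] N') (t : Module.Dual R M ⊗[R] N) :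
    dualTensorHom R M N' (LinearMap.lTensor _ u t) = u ∘ₗ dualTensorHom R M N t := by
  induction t with
  | zero => simp
  | tmul f n => ext m; simp
  | add x y hx hy =>
      simp only [map_add, hx, hy]; ext m; simp

lemma dth_bij_of_basis {ι : Type*} [Fintype ι] (b : Module.Basis ι R N) :
    Function.Bijective (dualTensorHom R M N) := by
  classical
  set inv : (M →ₗ[R] N) → Module.Dual R M ⊗[R] N :=
    fun φ => ∑ i, (b.coord i ∘ₗ φ) ⊗ₜ[R] b i with hinv
  have hright : ∀ φ, dualTensorHom R M N (inv φ) = φ := by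
    intro φ
    ext m
    simp [hinv, map_sum, Module.Basis.sum_repr]
  have hleft : ∀ t, inv (dualTensorHom R M N t) = t := by
    intro t
    induction t with
    | zero => simp [hinv]
    | tmul f n =>
        have : ∀ i, (b.coord i ∘ₗ dualTensorHom R M N (f ⊗ₜ[R] n)) = b.coord i n • f := by
          intro i; ext m; simp [mul_comm]
        simp only [hinv, this, TensorProduct.smul_tmul, ← TensorProduct.tmul_sum]
        congr 1
        exact b.sum_repr n
    | add x y hx hy =>
        have : ∀ φ ψ : M →ₗ[R] N, inv (φ + ψ) = inv φ + inv ψ := by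
          intro φ ψ
          simp [hinv, TensorProduct.add_tmul, ← Finset.sum_add_distrib,
            LinearMap.comp_add]
        rw [map_add, this, hx, hy]
  exact ⟨fun a b h => by rw [← hleft a, h, hleft b],
    fun φ => ⟨inv φ, hright φ⟩⟩

lemma dth_bij_of_projective [Module.Finite R N] [Module.Projective R N] :
    Function.Bijective (dualTensorHom R M N) := by
  obtain ⟨n, p, hp⟩ := Module.Finite.exists_fin' R N
  obtain ⟨s, hs⟩ := Module.projective_lifting_property p LinearMap.id hp
  have hfree := dth_bij_of_basis (M := M) (Pi.basisFun R (Fin n))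
  have hps : ∀ x : N, p (s x) = x := fun x => congrArg (· x) hs
  constructor
  · intro t₁ t₂ h
    have h1 : LinearMap.lTensor (Module.Dual R M) s t₁ =
        LinearMap.lTensor (Module.Dual R M) s t₂ := by
      apply hfree.1
      rw [dth_natural, dth_natural, h]
    have h2 := congrArg (LinearMap.lTensor (Module.Dual R M) p) h1
    rwa [← LinearMap.comp_apply, ← LinearMap.lTensor_comp, hs, LinearMap.lTensor_id,
      LinearMap.id_apply, ← LinearMap.comp_apply, ← LinearMap.lTensor_comp, hs,
      LinearMap.lTensor_id, LinearMap.id_apply] at h2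
  · intro φ
    obtain ⟨u, hu⟩ := hfree.2 (s ∘ₗ φ)
    refine ⟨LinearMap.lTensor _ p u, ?_⟩
    rw [dth_natural, hu]
    ext m; simp [hps]

end Aux

/-- Let `R` be a commutative Noetherian ring and `R'` an `R`-module admitting a
resolution `0 → P₂ → P₁ → R' → 0` with `P₁, P₂` finitely generated projective.  If `M` is a
finitely generated `R`-module with `Ext¹_R(M, R) = 0`, then the natural map
`Hom_R(M, R) ⊗_R R' → Hom_R(M, R')`, `f ⊗ x ↦ (m ↦ f m • x)`, is bijective. -/
theorem statement2 (R : Type u) [CommRing R] [IsNoetherianRing R]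
    (R' : Type*) [AddCommGroup R'] [Module R R']
    (P₁ P₂ : Type*) [AddCommGroup P₁] [Module R P₁] [AddCommGroup P₂] [Module R P₂]
    [Module.Finite R P₁] [Module.Projective R P₁]
    [Module.Finite R P₂] [Module.Projective R P₂]
    (f : P₂ →ₗ[R] P₁) (g : P₁ →ₗ[R] R')
    (hf : Function.Injective f) (hg : Function.Surjective g)
    (hfg : Function.Exact f g)
    (M : Type u) [AddCommGroup M] [Module R M] [Module.Finite R M]
    (hExt : Subsingleton
      (((_root_.Ext R (ModuleCat.{u} R) 1).obj
        (Opposite.op (ModuleCat.of R M))).obj (ModuleCat.of R R))) :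
    Function.Bijective (dualTensorHom R M R') := by
  classical
  obtain ⟨P⟩ := (HasProjectiveResolution.out (Z := ModuleCat.of R M))
  set K := P.complex.linearYonedaObj R (ModuleCat.of R R) with hK
  -- Ext¹(M, R) = 0 translated into a concrete lifting statement
  have h0 : Limits.IsZero (K.homology 1) := by
    have := ModuleCat.isZero_of_subsingleton
      (((_root_.Ext R (ModuleCat.{u} R) 1).obj
        (Opposite.op (ModuleCat.of R M))).obj (ModuleCat.of R R))
    exact this.of_iso (P.isoExt 1 (ModuleCat.of R R)).symm
  have hex : K.ExactAt 1 := (HomologicalComplex.exactAt_iff_isZero_homology _ _).2 h0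
  have hex' : (K.sc' 0 1 2).Exact :=
    (HomologicalComplex.exactAt_iff' K 0 1 2 (by simp) (by simp)).1 hex
  rw [ShortComplex.moduleCat_exact_iff] at hex'
  have key : ∀ φ : P.complex.X 1 ⟶ ModuleCat.of R R,
      φ.hom.comp (P.complex.d 2 1).hom = 0 → ∃ ψ : P.complex.X 0 ⟶ ModuleCat.of R R,
        φ.hom = ψ.hom.comp (P.complex.d 1 0).hom := by
    intro φ hφ
    obtain ⟨ψ, hψ⟩ := hex' φ (ModuleCat.hom_ext (f := P.complex.d 2 1 ≫ φ) (g := 0) hφ)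
    exact ⟨ψ, by rw [← hψ]; rfl⟩
  set d10 : ↑(P.complex.X 1) →ₗ[R] ↑(P.complex.X 0) := (P.complex.d 1 0).hom with hd10
  set d21 : ↑(P.complex.X 2) →ₗ[R] ↑(P.complex.X 1) := (P.complex.d 2 1).hom with hd21
  -- the lifting statement for maps into the finite projective module `P₂`
  obtain ⟨n, p, hp⟩ := Module.Finite.exists_fin' R P₂
  obtain ⟨s, hs⟩ := Module.projective_lifting_property p LinearMap.id hp
  have hps : ∀ x : P₂, p (s x) = x := fun x => congrArg (· x) hs
  have keyP₂ : ∀ φ : ↑(P.complex.X 1) →ₗ[R] P₂, φ ∘ₗ d21 = 0 →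
      ∃ ψ : ↑(P.complex.X 0) →ₗ[R] P₂, φ = ψ ∘ₗ d10 := by
    intro φ hφ
    have hcomp : ∀ j : Fin n, ∃ ψj : P.complex.X 0 ⟶ ModuleCat.of R R,
        ((LinearMap.proj j : (Fin n → R) →ₗ[R] R) ∘ₗ (s ∘ₗ φ) : ↑(P.complex.X 1) →ₗ[R] R)
          = ψj.hom.comp (P.complex.d 1 0).hom := by
      intro j
      apply key (ModuleCat.ofHom ((LinearMap.proj j : (Fin n → R) →ₗ[R] R) ∘ₗ (s ∘ₗ φ)))
      ext x
      have hx : φ (d21 x) = 0 := by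
        have := DFunLike.congr_fun hφ x
        simpa using this
      show (LinearMap.proj j : (Fin n → R) →ₗ[R] R) (s (φ (d21 x))) = 0
      rw [hx, map_zero]
      rfl
    choose ψj hψj using hcomp
    refine ⟨p ∘ₗ LinearMap.pi (fun j => ((ψj j).hom : ↑(P.complex.X 0) →ₗ[R] R)), ?_⟩
    ext x
    have : s (φ x) = fun j => ψj j (d10 x) := by
      funext j
      exact DFunLike.congr_fun (hψj j) x
    show φ x = p (fun j => ψj j (d10 x))
    rw [← this, hps]
  -- lifting of maps `M →ₗ R'` along `g`
  set e := LinearEquiv.ofInjective f hf with he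
  have hfe : ∀ z : LinearMap.range f, f (e.symm z) = (z : P₁) := by
    intro z
    rw [he]
    exact LinearEquiv.ofInjective_symm_apply (f := f) z
  have gf0 : ∀ x : P₂, g (f x) = 0 := fun x => hfg.apply_apply_eq_zero x
  set ε : ↑(P.complex.X 0) →ₗ[R] M := (P.π.f 0 : P.complex.X 0 ⟶ _).hom with hε
  have hεsurj : Function.Surjective ε :=
    (ModuleCat.epi_iff_surjective (P.π.f 0)).1 inferInstance
  have hεd : ∀ x, ε (d10 x) = 0 := by
    intro x
    exact DFunLike.congr_fun (congrArg ModuleCat.Hom.hom P.complex_d_comp_π_f_zero) x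
  have hkerε : ∀ x, ε x = 0 → x ∈ LinearMap.range d10 := by
    set Q := ModuleCat.of R (↑(P.complex.X 0) ⧸ LinearMap.range d10) with hQ
    set q : P.complex.X 0 ⟶ Q := ModuleCat.ofHom (LinearMap.range d10).mkQ with hq'
    have hq : P.complex.d 1 0 ≫ q = 0 := by
      ext y
      exact (Submodule.Quotient.mk_eq_zero _).2 ⟨y, rfl⟩
    obtain ⟨h, hh⟩ := Limits.CokernelCofork.IsColimit.desc' P.isColimitCokernelCofork q hq
    intro x hx
    have h1 : q.hom x = (h.hom : M →ₗ[R] Q) (ε x) :=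
      (DFunLike.congr_fun (congrArg ModuleCat.Hom.hom hh) x).symm
    rw [hx] at h1
    exact (Submodule.Quotient.mk_eq_zero _).1 (h1.trans (map_zero h.hom))
  have lift : ∀ φ : M →ₗ[R] R', ∃ ψ : M →ₗ[R] P₁, g ∘ₗ ψ = φ := by
    intro φ
    have hproj : Module.Projective R ↑(P.complex.X 0) := by
      rw [IsProjective.iff_projective]
      exact P.projective 0
    obtain ⟨α, hα⟩ := Module.projective_lifting_property g (φ ∘ₗ ε) hg
    have hker : ∀ y, α (d10 y) ∈ LinearMap.range f := by
      intro y
      apply (hfg _).1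
      have : g (α (d10 y)) = φ (ε (d10 y)) := DFunLike.congr_fun hα (d10 y)
      rw [this, hεd, map_zero]
    set β : ↑(P.complex.X 1) →ₗ[R] P₂ :=
      e.symm.toLinearMap ∘ₗ LinearMap.codRestrict (LinearMap.range f) (α ∘ₗ d10) hker
      with hβ
    have hfβ : ∀ y, f (β y) = α (d10 y) := by
      intro y
      show f (e.symm ⟨α (d10 y), hker y⟩) = α (d10 y)
      rw [hfe]
    have hβd : β ∘ₗ d21 = 0 := by
      ext x
      apply hf
      show f (β (d21 x)) = f 0
      rw [hfβ, map_zero]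
      have : d10 (d21 x) = 0 := DFunLike.congr_fun (congrArg ModuleCat.Hom.hom (P.complex.d_comp_d 2 1 0)) x
      rw [this, map_zero]
    obtain ⟨ψ, hψ⟩ := keyP₂ β hβd
    set α' : ↑(P.complex.X 0) →ₗ[R] P₁ := α - f ∘ₗ ψ with hα'
    have hα'd : ∀ x, α' (d10 x) = 0 := by
      intro x
      show α (d10 x) - f (ψ (d10 x)) = 0
      have : β x = ψ (d10 x) := DFunLike.congr_fun hψ x
      rw [← this, hfβ, sub_self]
    have hle : LinearMap.ker ε ≤ LinearMap.ker α' := by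
      intro x hx
      obtain ⟨y, rfl⟩ := hkerε x (LinearMap.mem_ker.1 hx)
      exact LinearMap.mem_ker.2 (hα'd y)
    set e₀ := LinearMap.quotKerEquivOfSurjective ε hεsurj with he₀
    set φt : M →ₗ[R] P₁ := ((LinearMap.ker ε).liftQ α' hle) ∘ₗ e₀.symm.toLinearMap
      with hφt
    have hdesc : ∀ x, φt (ε x) = α' x := by
      intro x
      have h1 : e₀.symm (ε x) = Submodule.Quotient.mk x := by
        apply e₀.injective
        rw [e₀.apply_symm_apply]
        rfl
      show (LinearMap.ker ε).liftQ α' hle (e₀.symm (ε x)) = α' x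
      rw [h1]
      rfl
    refine ⟨φt, ?_⟩
    ext m
    obtain ⟨x, rfl⟩ := hεsurj m
    show g (φt (ε x)) = φ (ε x)
    rw [hdesc]
    show g (α x - f (ψ x)) = φ (ε x)
    rw [map_sub, gf0, sub_zero]
    exact DFunLike.congr_fun hα x
  -- assemble the bijectivity
  have bijP₁ := dth_bij_of_projective (R := R) (M := M) (N := P₁)
  have bijP₂ := dth_bij_of_projective (R := R) (M := M) (N := P₂)
  constructor
  · rw [injective_iff_map_eq_zero]
    intro t ht
    obtain ⟨st, hst⟩ := LinearMap.lTensor_surjective (Module.Dual R M) hg t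
    set θ := dualTensorHom R M P₁ st with hθ
    have hgθ : ∀ m, g (θ m) = 0 := by
      intro m
      have : dualTensorHom R M R' (LinearMap.lTensor _ g st) = g ∘ₗ θ := dth_natural g st
      rw [hst, ht] at this
      exact (DFunLike.congr_fun this.symm m)
    have hmem : ∀ m, θ m ∈ LinearMap.range f := fun m => (hfg _).1 (hgθ m)
    set h2 : M →ₗ[R] P₂ :=
      e.symm.toLinearMap ∘ₗ LinearMap.codRestrict (LinearMap.range f) θ hmem with hh2
    have hfh : f ∘ₗ h2 = θ := by
      ext m
      show f (e.symm ⟨θ m, hmem m⟩) = θ m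
      rw [hfe]
    obtain ⟨u, hu⟩ := bijP₂.2 h2
    have h3 : dualTensorHom R M P₁ (LinearMap.lTensor _ f u) = θ := by
      rw [dth_natural, hu, hfh]
    have hsu : LinearMap.lTensor (Module.Dual R M) f u = st := bijP₁.1 h3
    have hgf : (g ∘ₗ f : P₂ →ₗ[R] R') = 0 := by ext x; exact gf0 x
    calc t = LinearMap.lTensor (Module.Dual R M) g
          (LinearMap.lTensor (Module.Dual R M) f u) := by rw [hsu, hst]
      _ = LinearMap.lTensor (Module.Dual R M) (g ∘ₗ f) u := by
          rw [LinearMap.lTensor_comp, LinearMap.comp_apply]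
      _ = 0 := by rw [hgf, LinearMap.lTensor_zero, LinearMap.zero_apply]
  · intro φ
    obtain ⟨ψ, hψ⟩ := lift φ
    obtain ⟨t, ht⟩ := bijP₁.2 ψ
    exact ⟨LinearMap.lTensor _ g t, by rw [dth_natural, ht, hψ]⟩
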